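/- Let Y be a real random variable with finite exponential moments of all orders, and let Λ(λ) = log E[e^{λY}]. Then lim_{λ→−∞} Λ(λ)/λ equals the essential infimum of Y (possibly −∞). -/

import Mathlib

open MeasureTheory Real Filter

/-- For a real random variable `Y` with all exponential moments finite and
cumulant generating function `Λ(λ) = log E[exp (λY)]`, we have
`Λ(λ)/λ → essinf Y` (possibly `−∞`, hence stated in `EReal`) as `λ → −∞`. -/
theorem stmt_1 {Ω : Type*} [MeasurableSpace Ω] (μ : Measure Ω) [IsProbabilityMeasure μ]
    (Y : Ω → ℝ) (hY : Measurable Y)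
    (hInt : ∀ l : ℝ, Integrable (fun ω => Real.exp (l * Y ω)) μ) :
    Tendsto (fun l : ℝ => ((Real.log (∫ ω, Real.exp (l * Y ω) ∂μ) / l : ℝ) : EReal))
      atBot (nhds (essInf (fun ω => (Y ω : EReal)) μ)) := by
  set F : ℝ → EReal := fun l => ((Real.log (∫ ω, Real.exp (l * Y ω) ∂μ) / l : ℝ) : EReal) with hF
  set m := essInf (fun ω => (Y ω : EReal)) μ with hm
  have hpos : ∀ l : ℝ, 0 < ∫ ω, Real.exp (l * Y ω) ∂μ := fun l => integral_exp_pos (hInt l)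
  have h1 : m ≤ liminf F atBot := by
    rw [← EReal.ge_of_forall_gt_iff_ge]
    intro c hc
    have hae : ∀ᵐ ω ∂μ, (c : ℝ) ≤ Y ω := by
      filter_upwards [ae_lt_of_lt_essInf hc] with ω h
      exact_mod_cast h.le
    have hev : ∀ᶠ l in atBot, (c : EReal) ≤ F l := by
      filter_upwards [eventually_lt_atBot (0 : ℝ)] with l hl
      have hle : ∫ ω, Real.exp (l * Y ω) ∂μ ≤ Real.exp (l * c) := by
        calc ∫ ω, Real.exp (l * Y ω) ∂μ ≤ ∫ _ω, Real.exp (l * c) ∂μ := by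
              refine integral_mono_ae (hInt l) (integrable_const _) ?_
              filter_upwards [hae] with ω hω
              exact Real.exp_le_exp.2 (mul_le_mul_of_nonpos_left hω hl.le)
          _ = Real.exp (l * c) := by simp
      have hlog : Real.log (∫ ω, Real.exp (l * Y ω) ∂μ) ≤ l * c :=
        (Real.log_le_iff_le_exp (hpos l)).2 hle
      have : (c : ℝ) ≤ Real.log (∫ ω, Real.exp (l * Y ω) ∂μ) / l := by
        rw [le_div_iff_of_neg hl]
        linarith [hlog]
      exact EReal.coe_le_coe_iff.2 this
    exact le_liminf_of_le (by isBoundedDefault) hev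
  have h2 : limsup F atBot ≤ m := by
    rw [← EReal.le_of_forall_lt_iff_le]
    intro b hb
    have hs : μ {ω | Y ω < b} ≠ 0 := by
      intro h0
      refine absurd (le_essInf_of_ae_le (f := fun ω => (Y ω : EReal)) (b : EReal) ?_) (not_le.mpr hb)
      rw [EventuallyLE, ae_iff]
      convert h0 using 2
      ext ω
      simp [not_le, EReal.coe_lt_coe_iff]
    set p : ℝ := (μ {ω | Y ω < b}).toReal with hp
    have hppos : 0 < p := ENNReal.toReal_pos hs (measure_ne_top μ _)
    have hmeas : MeasurableSet {ω | Y ω < b} := hY measurableSet_Iio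
    have key : ∀ l : ℝ, l < 0 → Real.exp (l * b) * p ≤ ∫ ω, Real.exp (l * Y ω) ∂μ := by
      intro l hl
      calc Real.exp (l * b) * p = ∫ _ω in {ω | Y ω < b}, Real.exp (l * b) ∂μ := by
            rw [setIntegral_const, smul_eq_mul, mul_comm]; rfl
        _ ≤ ∫ ω in {ω | Y ω < b}, Real.exp (l * Y ω) ∂μ := by
            refine setIntegral_mono_on (integrableOn_const (measure_ne_top μ _))
              ((hInt l).integrableOn) hmeas ?_
            intro ω hω
            exact Real.exp_le_exp.2 (mul_le_mul_of_nonpos_left (le_of_lt hω) hl.le)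
        _ ≤ ∫ ω, Real.exp (l * Y ω) ∂μ :=
            setIntegral_le_integral (hInt l) (Filter.Eventually.of_forall fun ω => (Real.exp_pos _).le)
    have hub : ∀ᶠ l in atBot, F l ≤ ((b + Real.log p / l : ℝ) : EReal) := by
      filter_upwards [eventually_lt_atBot (0 : ℝ)] with l hl
      rw [hF, EReal.coe_le_coe_iff]
      have hlog : l * b + Real.log p ≤ Real.log (∫ ω, Real.exp (l * Y ω) ∂μ) := by
        calc l * b + Real.log p = Real.log (Real.exp (l * b) * p) := by
              rw [Real.log_mul (Real.exp_ne_zero _) (ne_of_gt hppos), Real.log_exp]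
          _ ≤ _ := Real.log_le_log (by positivity) (key l hl)
      have hne : l ≠ 0 := ne_of_lt hl
      have heq : (l * b + Real.log p) / l = b + Real.log p / l := by
        field_simp
      calc Real.log (∫ ω, Real.exp (l * Y ω) ∂μ) / l ≤ (l * b + Real.log p) / l :=
            (div_le_div_right_of_neg hl).2 hlog
        _ = b + Real.log p / l := heq
    have hg : Tendsto (fun l : ℝ => ((b + Real.log p / l : ℝ) : EReal)) atBot (nhds (b : EReal)) := by
      rw [EReal.tendsto_coe]
      have hdiv : Tendsto (fun l : ℝ => Real.log p / l) atBot (nhds 0) := by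
        have h' : Tendsto (fun l : ℝ => Real.log p / (-l)) atBot (nhds 0) :=
          tendsto_const_nhds.div_atTop tendsto_neg_atBot_atTop
        have := h'.neg
        simp only [neg_zero] at this
        refine this.congr fun l => by rw [div_neg, neg_neg]
      simpa using tendsto_const_nhds.add hdiv
    calc limsup F atBot ≤ limsup (fun l : ℝ => ((b + Real.log p / l : ℝ) : EReal)) atBot :=
          limsup_le_limsup hub
      _ = (b : EReal) := hg.limsup_eq
  exact tendsto_of_le_liminf_of_limsup_le h1 h2
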